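/- For n ≥ 2, the polynomial U_{n-1}(x) + U_{n-2}(x) has exactly n−1 distinct real roots, namely x = cos(2kπ/(2n−1)) for k = 1, 2, …, n−1, and all of these lie in the open interval (−1, 1). -/

import Mathlib

noncomputable def Uv (k : ℤ) (t : ℝ) : ℝ := (Polynomial.Chebyshev.U ℝ k).eval t
noncomputable def Tv (k : ℤ) (t : ℝ) : ℝ := (Polynomial.Chebyshev.T ℝ k).eval t

open Real in
lemma Uv_rec (k : ℤ) (x : ℝ) : Uv (k+2) x = 2*x*Uv (k+1) x - Uv k x := by
  simp [Uv, Polynomial.Chebyshev.U_add_two]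

lemma Uv_zero (x : ℝ) : Uv 0 x = 1 := by simp [Uv]
lemma Uv_neg_one (x : ℝ) : Uv (-1) x = 0 := by simp [Uv, Polynomial.Chebyshev.U_neg_one]
lemma Uv_one (x : ℝ) : Uv 1 x = 2*x := by simp [Uv, Polynomial.Chebyshev.U_one]

lemma sin_add_sin' (a b : ℝ) :
    Real.sin a + Real.sin b = 2 * Real.sin ((a+b)/2) * Real.cos ((a-b)/2) := by
  have h := Real.sin_sub_sin a (-b)
  rw [Real.sin_neg, sub_neg_eq_add, sub_neg_eq_add, ← sub_eq_add_neg] at h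
  linarith

lemma Uv_cos (k : ℤ) (θ : ℝ) : Uv k (Real.cos θ) * Real.sin θ = Real.sin ((k+1)*θ) :=
  Polynomial.Chebyshev.U_real_cos θ k

lemma Uv_grow (x : ℝ) (hx : 1 ≤ x) :
    ∀ m : ℕ, Uv ((m:ℤ) - 1) x < Uv (m:ℤ) x ∧ 0 < Uv (m:ℤ) x := by
  intro m
  induction m with
  | zero => simp [Uv_zero, Uv_neg_one]
  | succ m ih =>
    have hrec := Uv_rec ((m:ℤ)-1) x
    rw [show ((m:ℤ)-1+2) = ((m:ℕ)+1:ℕ) by push_cast; ring,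
        show ((m:ℤ)-1+1) = (m:ℤ) by ring] at hrec
    constructor
    · rw [show (((m:ℕ)+1:ℕ):ℤ)-1 = (m:ℤ) by push_cast; ring]
      nlinarith [ih.1, ih.2]
    · rw [hrec]; nlinarith [ih.1, ih.2]

lemma Uv_alt (x : ℝ) (hx : x ≤ -1) :
    ∀ m : ℕ, 0 < (-1:ℝ)^m * Uv (m:ℤ) x ∧
      (-1:ℝ)^m * Uv (m:ℤ) x < (-1:ℝ)^(m+1) * Uv ((m:ℤ)+1) x := by
  intro m
  induction m with
  | zero =>
    simp only [pow_zero, pow_one, Nat.cast_zero, one_mul, zero_add]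
    rw [Uv_zero, Uv_one]
    constructor
    · norm_num
    · nlinarith
  | succ m ih =>
    obtain ⟨h1, h2⟩ := ih
    have hrec := Uv_rec (m:ℤ) x
    have hcast : (((m:ℕ)+1:ℕ):ℤ) = (m:ℤ)+1 := by push_cast; ring
    have e2 : (-1:ℝ)^(m+1) = -(-1:ℝ)^m := by rw [pow_succ]; ring
    have e3 : (-1:ℝ)^(m+1+1) = (-1:ℝ)^m := by rw [pow_succ, pow_succ]; ring
    rw [e2] at h2
    constructor
    · rw [hcast, e2]; linarith
    · rw [show (((m:ℕ)+1:ℕ):ℤ)+1 = (m:ℤ)+2 by push_cast; ring, hcast, hrec, e2, e3]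
      have hB : 0 < -(-1:ℝ)^m * Uv ((m:ℤ)+1) x := lt_trans h1 h2
      nlinarith [mul_nonneg (by linarith : (0:ℝ) ≤ -2*x-2) hB.le]

theorem stmt_11 (n : ℕ) (hn : 2 ≤ n) :
    {x : ℝ | Uv ((n : ℤ) - 1) x + Uv ((n : ℤ) - 2) x = 0}
      = (fun k : ℕ => Real.cos (2 * (k : ℝ) * Real.pi / (2 * (n : ℝ) - 1))) ''
          (Set.Icc 1 (n - 1)) ∧
    Set.InjOn (fun k : ℕ => Real.cos (2 * (k : ℝ) * Real.pi / (2 * (n : ℝ) - 1)))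
      (Set.Icc 1 (n - 1)) ∧
    ∀ k ∈ Set.Icc 1 (n - 1),
      Real.cos (2 * (k : ℝ) * Real.pi / (2 * (n : ℝ) - 1)) ∈ Set.Ioo (-1 : ℝ) 1 := by
  have hπ := Real.pi_pos
  have hN1 : (1:ℝ) ≤ (n:ℝ) - 1 := by
    have : (2:ℝ) ≤ n := by exact_mod_cast hn
    linarith
  have hden : (0:ℝ) < 2*(n:ℝ) - 1 := by linarith
  -- θ_k in (0,π) for k ∈ [1,n-1]
  have hθmem : ∀ k ∈ Set.Icc 1 (n-1),
      2*(k:ℝ)*Real.pi/(2*(n:ℝ)-1) ∈ Set.Ioo (0:ℝ) Real.pi := by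
    rintro k ⟨hk1, hk2⟩
    have hk1' : (1:ℝ) ≤ k := by exact_mod_cast hk1
    have hk2' : (k:ℝ) ≤ (n:ℝ) - 1 := by
      have : (k:ℝ) ≤ ((n-1 : ℕ):ℝ) := by exact_mod_cast hk2
      rw [Nat.cast_sub (by omega)] at this; simpa using this
    constructor
    · positivity
    · rw [div_lt_iff₀ hden]; nlinarith
  -- nonvanishing outside (-1,1)
  have hout : ∀ x : ℝ, 1 ≤ |x| → Uv ((n:ℤ)-1) x + Uv ((n:ℤ)-2) x ≠ 0 := by
    intro x hx
    rcases le_or_gt 1 x with h1 | h1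
    · have hg1 := Uv_grow x h1 (n-1)
      have hg2 := Uv_grow x h1 (n-2)
      rw [show (((n-1:ℕ)):ℤ) = (n:ℤ)-1 by omega] at hg1
      rw [show (((n-2:ℕ)):ℤ) = (n:ℤ)-2 by omega] at hg2
      nlinarith [hg1.2, hg2.2]
    · have h2 : x ≤ -1 := by
        rcases abs_cases x with ⟨he, _⟩ | ⟨he, _⟩ <;> rw [he] at hx <;> linarith
      have ha := Uv_alt x h2 (n-2)
      rw [show (((n-2:ℕ)):ℤ) = (n:ℤ)-2 by omega,
          show ((n:ℤ)-2)+1 = (n:ℤ)-1 by ring] at ha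
      obtain ⟨ha1, ha2⟩ := ha
      intro hsum
      have : Uv ((n:ℤ)-1) x = - Uv ((n:ℤ)-2) x := by linarith
      rw [this] at ha2
      rw [show (n-2)+1 = n-1 by omega, show (n-1 : ℕ) = (n-2)+1 by omega, pow_succ] at ha2
      nlinarith
  -- product identity
  have hprod : ∀ θ : ℝ,
      (Uv ((n:ℤ)-1) (Real.cos θ) + Uv ((n:ℤ)-2) (Real.cos θ)) * Real.sin θ
        = 2 * Real.sin ((2*(n:ℝ)-1) * θ / 2) * Real.cos (θ/2) := by
    intro θ
    have h1 := Uv_cos ((n:ℤ)-1) θ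
    have h2 := Uv_cos ((n:ℤ)-2) θ
    push_cast at h1 h2
    rw [add_mul, h1, h2, sin_add_sin']
    have e1 : (((n:ℝ)-1+1)*θ + ((n:ℝ)-2+1)*θ)/2 = (2*(n:ℝ)-1)*θ/2 := by ring
    have e2 : (((n:ℝ)-1+1)*θ - ((n:ℝ)-2+1)*θ)/2 = θ/2 := by ring
    rw [e1, e2]
  constructor
  · ext x
    simp only [Set.mem_setOf_eq, Set.mem_image]
    constructor
    · intro hx
      have hxI : x ∈ Set.Ioo (-1:ℝ) 1 := by
        by_contra hxn
        simp only [Set.mem_Ioo, not_and_or, not_lt] at hxn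
        refine hout x ?_ hx
        rw [le_abs]
        rcases hxn with h | h
        · right; linarith
        · left; exact h
      obtain ⟨hxl, hxr⟩ := hxI
      set θ := Real.arccos x with hθdef
      have hθ0 : 0 < θ := Real.arccos_pos.mpr hxr
      have hθπ : θ < Real.pi := lt_of_le_of_ne (Real.arccos_le_pi x)
        (fun h => by have := Real.arccos_eq_pi.mp h; linarith)
      have hcos : Real.cos θ = x := Real.cos_arccos hxl.le hxr.le
      have hsin : 0 < Real.sin θ := Real.sin_pos_of_pos_of_lt_pi hθ0 hθπ
      have hp := hprod θ
      rw [hcos, hx, zero_mul] at hp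
      have hcoshalf : 0 < Real.cos (θ/2) :=
        Real.cos_pos_of_mem_Ioo ⟨by linarith, by linarith⟩
      have hs0 : Real.sin ((2*(n:ℝ)-1) * θ / 2) = 0 := by
        rcases mul_eq_zero.mp hp.symm with h | h
        · rcases mul_eq_zero.mp h with h' | h'
          · norm_num at h'
          · exact h'
        · exact absurd h (ne_of_gt hcoshalf)
      obtain ⟨m, hm⟩ := Real.sin_eq_zero_iff.mp hs0
      have hθeq : θ = 2*(m:ℝ)*Real.pi/(2*(n:ℝ)-1) := by
        field_simp at hm ⊢; linarith
      have hm0 : 0 < m := by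
        by_contra hm0
        push_neg at hm0
        have hmr : (m:ℝ) ≤ 0 := by exact_mod_cast hm0
        have hnum : 2*(m:ℝ)*Real.pi ≤ 0 := by nlinarith
        have : θ ≤ 0 := by
          rw [hθeq]; exact div_nonpos_of_nonpos_of_nonneg hnum hden.le
        linarith
      have hmn : m ≤ (n:ℤ) - 1 := by
        by_contra hmn
        push_neg at hmn
        have hni : (n:ℤ) ≤ m := by omega
        have hnr : ((n:ℕ):ℝ) ≤ (m:ℝ) := by exact_mod_cast hni
        have : Real.pi ≤ θ := by
          rw [hθeq, le_div_iff₀ hden]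
          nlinarith [mul_le_mul_of_nonneg_right hnr hπ.le]
        linarith
      refine ⟨m.toNat, ⟨?_, ?_⟩, ?_⟩
      · omega
      · omega
      · have : ((m.toNat : ℕ):ℝ) = (m:ℝ) := by
          rw [← Int.cast_natCast]; congr 1; omega
        rw [this, ← hθeq, hcos]
    · rintro ⟨k, hk, rfl⟩
      obtain ⟨hθ0, hθπ⟩ := hθmem k hk
      set θ := 2*(k:ℝ)*Real.pi/(2*(n:ℝ)-1) with hθdef
      have hsin : 0 < Real.sin θ := Real.sin_pos_of_pos_of_lt_pi hθ0 hθπ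
      have hp := hprod θ
      have harg : (2*(n:ℝ)-1) * θ / 2 = (k:ℝ) * Real.pi := by
        rw [hθdef]; field_simp
      rw [harg, Real.sin_nat_mul_pi, mul_zero, zero_mul] at hp
      exact (mul_eq_zero.mp hp).resolve_right (ne_of_gt hsin)
  constructor
  · intro j hj k hk heq
    simp only at heq
    have hjm := hθmem j hj
    have hkm := hθmem k hk
    have := Real.injOn_cos ⟨hjm.1.le, hjm.2.le⟩ ⟨hkm.1.le, hkm.2.le⟩ heq
    field_simp at this
    have h : (j:ℝ) = k := by linarith
    exact_mod_cast h
  · intro k hk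
    obtain ⟨hθ0, hθπ⟩ := hθmem k hk
    constructor
    · calc (-1:ℝ) = Real.cos Real.pi := (Real.cos_pi).symm
        _ < _ := Real.strictAntiOn_cos ⟨hθ0.le, hθπ.le⟩ ⟨hπ.le, le_refl _⟩ hθπ
    · calc _ < Real.cos 0 := Real.strictAntiOn_cos ⟨le_refl _, hπ.le⟩ ⟨hθ0.le, hθπ.le⟩ hθ0
        _ = 1 := Real.cos_zero
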